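/- For every n ≥ 4 (so that fib(n) ≥ 3): Δ(J_{fib(n)}(1)) = fib(n−1), and the Jaconian set of J_{fib(n)}(1) is the singleton {fib(n−1)}, i.e. 𝕁(J_{fib(n)}(1)) = {fib(n−1)}. -/
import Mathlib


/-- The Jaco out-degree function `f`: `f 0 = 0` and, for `n ≥ 1`,
`f n = n - #{k : 1 ≤ k < n ∧ k + f k ≥ n}` (the out-degree of `v_n` in `J_∞(1)`). -/
def jacoF : ℕ → ℕ
  | 0 => 0
  | n + 1 =>
    (n + 1) - ((Finset.range (n + 1)).attach.filter
      (fun a => 1 ≤ a.1 ∧ n + 1 ≤ a.1 + jacoF a.1)).card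
  decreasing_by all_goals exact Finset.mem_range.mp a.2

/-- The in-degree `d⁻(j) = #{i : 1 ≤ i < j ∧ j ≤ i + f i}` of `v_j` in `J_∞(1)`. -/
def jacoDin (j : ℕ) : ℕ := ((Finset.Ico 1 j).filter (fun i => j ≤ i + jacoF i)).card

/-- The degree `d_n(j) = d⁻(j) + #{k : j < k ≤ n ∧ k ≤ j + f j}` of `v_j` in the
underlying undirected graph of the finite Jaco graph `J_n(1)`. -/
def jacoDeg (n j : ℕ) : ℕ :=
  jacoDin j + ((Finset.Ioc j n).filter (fun k => k ≤ j + jacoF j)).card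

/-- The maximum degree `Δ(J_n(1)) = max_{1 ≤ j ≤ n} d_n(j)`. -/
def jacoDelta (n : ℕ) : ℕ := (Finset.Icc 1 n).sup (jacoDeg n)

/-- The Jaconian set `𝕁(J_n(1)) = {j : 1 ≤ j ≤ n ∧ d_n(j) = Δ(J_n(1))}`. -/
def jacoJ (n : ℕ) : Finset ℕ := (Finset.Icc 1 n).filter (fun j => jacoDeg n j = jacoDelta n)


lemma attach_filter_card (n : ℕ) (p : ℕ → Prop) [DecidablePred p] :
    ((Finset.range n).attach.filter (fun a => p a.1)).card = ((Finset.range n).filter p).card := by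
  rw [Finset.filter_attach, Finset.card_map, Finset.card_attach]

lemma jacoF_eq (j : ℕ) (hj : 1 ≤ j) :
    jacoF j = 1 + ((Finset.Ico 1 j).filter (fun k => k + jacoF k < j)).card := by
  obtain ⟨n, rfl⟩ : ∃ n, j = n + 1 := ⟨j - 1, by omega⟩
  rw [jacoF]
  rw [attach_filter_card (n+1) (fun a => 1 ≤ a ∧ n + 1 ≤ a + jacoF a)]
  have h1 : (Finset.range (n+1)).filter (fun a => 1 ≤ a ∧ n + 1 ≤ a + jacoF a)
      = (Finset.Ico 1 (n+1)).filter (fun a => ¬ (a + jacoF a < n + 1)) := by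
    ext x
    simp only [Finset.mem_filter, Finset.mem_Ico, Finset.mem_range]
    omega
  rw [h1]
  have h2 := Finset.card_filter_add_card_filter_not (s := Finset.Ico 1 (n+1))
    (p := fun a => a + jacoF a < n + 1)
  have h3 : (Finset.Ico 1 (n+1)).card = n := by simp
  have h4 := Finset.card_filter_le (Finset.Ico 1 (n+1)) (fun a => a + jacoF a < n + 1)
  omega

lemma jacoF_pos (j : ℕ) (hj : 1 ≤ j) : 1 ≤ jacoF j := by
  rw [jacoF_eq j hj]; omega

lemma jacoF_step : ∀ j, jacoF j ≤ jacoF (j+1) ∧ jacoF (j+1) ≤ jacoF j + 1 := by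
  intro j
  induction j using Nat.strong_induction_on with
  | _ j IH =>
    rcases Nat.eq_zero_or_pos j with rfl | hj
    · have h0 : jacoF 0 = 0 := by rw [jacoF]
      have h1 : jacoF 1 = 1 := by rw [jacoF_eq 1 le_rfl]; simp
      show jacoF 0 ≤ jacoF 1 ∧ jacoF 1 ≤ jacoF 0 + 1
      omega
    -- g strictly increasing up to j
    have key : ∀ b, b ≤ j → ∀ a, a < b → a + jacoF a < b + jacoF b := by
      intro b
      induction b with
      | zero => omega
      | succ c ihc =>
        intro hb a ha
        have h1 := (IH c (by omega)).1
        rcases Nat.lt_or_ge a c with h | h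
        · have := ihc (by omega) a h
          omega
        · have : a = c := by omega
          subst this
          omega
    have hfj : jacoF j = 1 + ((Finset.Ico 1 j).filter (fun k => k + jacoF k < j)).card :=
      jacoF_eq j hj
    have hfj1 : jacoF (j+1) = 1 + ((Finset.Ico 1 (j+1)).filter (fun k => k + jacoF k < j+1)).card :=
      jacoF_eq (j+1) (by omega)
    have hsplit : (Finset.Ico 1 (j+1)).filter (fun k => k + jacoF k < j+1)
        = (Finset.Ico 1 j).filter (fun k => k + jacoF k < j)
          ∪ (Finset.Ico 1 j).filter (fun k => k + jacoF k = j) := by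
      ext x
      simp only [Finset.mem_filter, Finset.mem_Ico, Finset.mem_union]
      constructor
      · intro ⟨⟨h1, h2⟩, h3⟩
        have hxj : x ≠ j := by
          intro h
          subst h
          have := jacoF_pos _ hj
          omega
        omega
      · intro h; omega
    have hdisj : Disjoint ((Finset.Ico 1 j).filter (fun k => k + jacoF k < j))
        ((Finset.Ico 1 j).filter (fun k => k + jacoF k = j)) := by
      rw [Finset.disjoint_left]
      intro a ha hb
      simp only [Finset.mem_filter] at ha hb
      omega
    have hone : ((Finset.Ico 1 j).filter (fun k => k + jacoF k = j)).card ≤ 1 := by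
      rw [Finset.card_le_one]
      intro a ha b hb
      simp only [Finset.mem_filter, Finset.mem_Ico] at ha hb
      rcases Nat.lt_trichotomy a b with h | h | h
      · have := key b (by omega) a h; omega
      · exact h
      · have := key a (by omega) b h; omega
    rw [hsplit, Finset.card_union_of_disjoint hdisj] at hfj1
    omega

lemma jacoF_mono : Monotone jacoF :=
  monotone_nat_of_le_succ (fun j => (jacoF_step j).1)

lemma jacoG_strictMono : StrictMono (fun j => j + jacoF j) := by
  apply strictMono_nat_of_lt_succ
  intro j
  have := (jacoF_step j).1
  omega

lemma jacoF_le_self (j : ℕ) : jacoF j ≤ j := by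
  induction j with
  | zero => rw [jacoF]
  | succ n ih => have := (jacoF_step n).2; omega

lemma jacoF_one : jacoF 1 = 1 := by rw [jacoF_eq 1 le_rfl]; simp

lemma jacoF_two : jacoF 2 = 1 := by
  rw [jacoF_eq 2 (by norm_num), show Finset.Ico 1 2 = {1} by decide]
  simp [Finset.filter_singleton, jacoF_one]

lemma jacoF_three : jacoF 3 = 2 := by
  rw [jacoF_eq 3 (by norm_num), show Finset.Ico 1 3 = {1, 2} by decide]
  simp [Finset.filter_insert, Finset.filter_singleton, jacoF_one, jacoF_two]

lemma jacoF_four : jacoF 4 = 3 := by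
  rw [jacoF_eq 4 (by norm_num), show Finset.Ico 1 4 = {1, 2, 3} by decide]
  simp [Finset.filter_insert, Finset.filter_singleton, jacoF_one, jacoF_two, jacoF_three]

lemma jacoF_five : jacoF 5 = 3 := by
  rw [jacoF_eq 5 (by norm_num), show Finset.Ico 1 5 = {1, 2, 3, 4} by decide]
  simp [Finset.filter_insert, Finset.filter_singleton, jacoF_one, jacoF_two, jacoF_three,
    jacoF_four]

lemma jacoF_zero : jacoF 0 = 0 := by rw [jacoF]

lemma jacoT : ∀ m, 1 ≤ m → ∀ r, r ≤ Nat.fib (m+1) →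
    jacoF (Nat.fib (m+2) + r) = Nat.fib (m+1) + jacoF r := by
  intro m
  induction m using Nat.strong_induction_on with
  | _ m IH =>
    intro hm r hr
    have f2 : Nat.fib 2 = 1 := by rfl
    have f3 : Nat.fib 3 = 2 := by rfl
    have f4 : Nat.fib 4 = 3 := by rfl
    rcases Nat.lt_or_ge m 3 with hm3 | hm3
    · interval_cases m
      · rw [f2] at hr
        rw [f3, f2]
        interval_cases r
        · simp [jacoF_zero, jacoF_two]
        · simp [jacoF_one, jacoF_three]
      · rw [f3] at hr
        rw [f4, f3]
        interval_cases r
        · simp [jacoF_zero, jacoF_three]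
        · simp [jacoF_one, jacoF_four]
        · simp [jacoF_two, jacoF_five]
    · obtain ⟨p, rfl⟩ : ∃ p, m = p + 3 := ⟨m - 3, by omega⟩
      have IH1 := IH (p+2) (by omega) (by omega)
      have IH2 := IH (p+1) (by omega) (by omega)
      simp only [show p+2+1 = p+3 from rfl, show p+2+2 = p+4 from rfl] at IH1
      simp only [show p+1+1 = p+2 from rfl, show p+1+2 = p+3 from rfl] at IH2
      simp only [show p+3+1 = p+4 from rfl] at hr
      have hA : Nat.fib (p+5) = Nat.fib (p+3) + Nat.fib (p+4) := Nat.fib_add_two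
      have hB : Nat.fib (p+4) = Nat.fib (p+2) + Nat.fib (p+3) := Nat.fib_add_two
      have hCpos : 0 < Nat.fib (p+3) := Nat.fib_pos.mpr (by omega)
      have hBpos : 0 < Nat.fib (p+4) := Nat.fib_pos.mpr (by omega)
      have hQ2 : jacoF (Nat.fib (p+3)) = Nat.fib (p+2) := by
        simpa [jacoF_zero] using IH2 0 (Nat.zero_le _)
      have hQ1 : jacoF (Nat.fib (p+4)) = Nat.fib (p+3) := by
        simpa [jacoF_zero] using IH1 0 (Nat.zero_le _)
      have hQ0 : jacoF (Nat.fib (p+5)) = Nat.fib (p+4) := by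
        have h := IH1 (Nat.fib (p+3)) le_rfl
        rw [hQ2] at h
        rw [show Nat.fib (p+4) + Nat.fib (p+3) = Nat.fib (p+5) by omega] at h
        omega
      show jacoF (Nat.fib (p+5) + r) = Nat.fib (p+4) + jacoF r
      rcases Nat.eq_zero_or_pos r with rfl | hrpos
      · simp [jacoF_zero, hQ0]
      have h0 : jacoF (Nat.fib (p+5) + r) = 1 +
          ((Finset.Ico 1 (Nat.fib (p+5) + r)).filter
            (fun k => k + jacoF k < Nat.fib (p+5) + r)).card :=
        jacoF_eq _ (by omega)
      have hstep1 : (Finset.Ico 1 (Nat.fib (p+5) + r)).filter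
            (fun k => k + jacoF k < Nat.fib (p+5) + r)
          = (Finset.Ico 1 (Nat.fib (p+5))).filter
            (fun k => k + jacoF k < Nat.fib (p+5) + r) := by
        ext x
        simp only [Finset.mem_filter, Finset.mem_Ico]
        constructor
        · rintro ⟨⟨hx1, hx2⟩, hx3⟩
          refine ⟨⟨hx1, ?_⟩, hx3⟩
          by_contra hge
          have h5 : Nat.fib (p+5) + jacoF (Nat.fib (p+5)) ≤ x + jacoF x :=
            jacoG_strictMono.monotone (by omega)
          rw [hQ0] at h5
          have : r ≤ Nat.fib (p+4) := hr
          omega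
        · rintro ⟨⟨hx1, hx2⟩, hx3⟩
          exact ⟨⟨hx1, by omega⟩, hx3⟩
      have hstep2 : (Finset.Ico 1 (Nat.fib (p+5))).filter
            (fun k => k + jacoF k < Nat.fib (p+5) + r)
          = (Finset.Ico 1 (Nat.fib (p+5))).filter (fun k => k + jacoF k < Nat.fib (p+5))
            ∪ (Finset.Ico 1 (Nat.fib (p+5))).filter
              (fun k => Nat.fib (p+5) ≤ k + jacoF k ∧ k + jacoF k < Nat.fib (p+5) + r) := by
        ext x
        simp only [Finset.mem_filter, Finset.mem_Ico, Finset.mem_union]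
        omega
      have hdisj : Disjoint
          ((Finset.Ico 1 (Nat.fib (p+5))).filter (fun k => k + jacoF k < Nat.fib (p+5)))
          ((Finset.Ico 1 (Nat.fib (p+5))).filter
              (fun k => Nat.fib (p+5) ≤ k + jacoF k ∧ k + jacoF k < Nat.fib (p+5) + r)) := by
        rw [Finset.disjoint_left]
        intro a ha hb
        simp only [Finset.mem_filter] at ha hb
        omega
      have hc1 : jacoF (Nat.fib (p+5)) = 1 +
          ((Finset.Ico 1 (Nat.fib (p+5))).filter
            (fun k => k + jacoF k < Nat.fib (p+5))).card :=
        jacoF_eq _ (by omega)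
      have hset : (Finset.Ico 1 (Nat.fib (p+5))).filter
              (fun k => Nat.fib (p+5) ≤ k + jacoF k ∧ k + jacoF k < Nat.fib (p+5) + r)
          = ((Finset.range (Nat.fib (p+3))).filter (fun s => s + jacoF s < r)).image
              (fun s => Nat.fib (p+4) + s) := by
        ext x
        simp only [Finset.mem_filter, Finset.mem_Ico, Finset.mem_image, Finset.mem_range]
        constructor
        · rintro ⟨⟨hx1, hx2⟩, hge, hlt⟩
          have hxB : Nat.fib (p+4) ≤ x := by
            by_contra hxB
            have h5 : x + jacoF x < Nat.fib (p+4) + jacoF (Nat.fib (p+4)) :=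
              jacoG_strictMono (by omega)
            rw [hQ1] at h5
            omega
          refine ⟨x - Nat.fib (p+4), ⟨by omega, ?_⟩, by omega⟩
          have h6 := IH1 (x - Nat.fib (p+4)) (by omega)
          rw [show Nat.fib (p+4) + (x - Nat.fib (p+4)) = x by omega] at h6
          omega
        · rintro ⟨s, ⟨hsC, hscond⟩, rfl⟩
          have h6 := IH1 s (by omega)
          refine ⟨⟨by omega, by omega⟩, by omega, by omega⟩
      have hinj : Function.Injective (fun s => Nat.fib (p+4) + s) := by
        intro a b h
        simpa using h
      have hcimg := Finset.card_image_of_injective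
        ((Finset.range (Nat.fib (p+3))).filter (fun s => s + jacoF s < r)) hinj
      have hset2 : (Finset.range (Nat.fib (p+3))).filter (fun s => s + jacoF s < r)
          = insert 0 ((Finset.Ico 1 r).filter (fun s => s + jacoF s < r)) := by
        ext x
        simp only [Finset.mem_filter, Finset.mem_insert, Finset.mem_range, Finset.mem_Ico]
        constructor
        · rintro ⟨hxC, hxcond⟩
          rcases Nat.eq_zero_or_pos x with rfl | hx1
          · exact Or.inl rfl
          · have := jacoF_pos x hx1
            exact Or.inr ⟨⟨hx1, by omega⟩, hxcond⟩
        · rintro (rfl | ⟨⟨hx1, hxr⟩, hxcond⟩)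
          · rw [jacoF_zero]
            exact ⟨hCpos, by omega⟩
          · refine ⟨?_, hxcond⟩
            by_contra hxC
            have h5 : Nat.fib (p+3) + jacoF (Nat.fib (p+3)) ≤ x + jacoF x :=
              jacoG_strictMono.monotone (by omega)
            rw [hQ2] at h5
            omega
      have hnotmem : 0 ∉ (Finset.Ico 1 r).filter (fun s => s + jacoF s < r) := by
        simp
      have hcard3 : ((Finset.range (Nat.fib (p+3))).filter (fun s => s + jacoF s < r)).card
          = 1 + ((Finset.Ico 1 r).filter (fun s => s + jacoF s < r)).card := by
        rw [hset2, Finset.card_insert_of_notMem hnotmem]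
        omega
      have hfr : jacoF r = 1 + ((Finset.Ico 1 r).filter (fun s => s + jacoF s < r)).card :=
        jacoF_eq r hrpos
      rw [hstep1, hstep2, Finset.card_union_of_disjoint hdisj, hset, hcimg, hcard3] at h0
      omega

lemma jacoQ (m : ℕ) : jacoF (Nat.fib (m+2)) = Nat.fib (m+1) := by
  rcases Nat.eq_zero_or_pos m with rfl | hm
  · show jacoF (Nat.fib 2) = Nat.fib 1
    rw [show Nat.fib 2 = 1 from rfl, show Nat.fib 1 = 1 from rfl, jacoF_one]
  · simpa [jacoF_zero] using jacoT m hm 0 (Nat.zero_le _)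

lemma jacoDin_eq (j : ℕ) (hj : 1 ≤ j) : jacoDin j + jacoF j = j := by
  rw [jacoDin]
  have h2 := Finset.card_filter_add_card_filter_not (s := Finset.Ico 1 j)
    (p := fun i => j ≤ i + jacoF i)
  have h3 : (Finset.Ico 1 j).card = j - 1 := by simp
  have h4 : jacoF j = 1 + ((Finset.Ico 1 j).filter (fun k => k + jacoF k < j)).card :=
    jacoF_eq j hj
  have h5 : (Finset.Ico 1 j).filter (fun i => ¬ j ≤ i + jacoF i)
      = (Finset.Ico 1 j).filter (fun k => k + jacoF k < j) := by
    apply Finset.filter_congr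
    intro x _
    simp only [not_le]
  rw [h5] at h2
  omega

lemma jacoDeg_eq (n j : ℕ) (h1 : 1 ≤ j) (h2 : j ≤ n) :
    jacoDeg n j = (j - jacoF j) + min (jacoF j) (n - j) := by
  rw [jacoDeg]
  have hd := jacoDin_eq j h1
  have hout : (Finset.Ioc j n).filter (fun k => k ≤ j + jacoF j)
      = Finset.Ioc j (min n (j + jacoF j)) := by
    ext x
    simp only [Finset.mem_filter, Finset.mem_Ioc, le_min_iff]
    omega
  rw [hout, Nat.card_Ioc]
  have := jacoF_le_self j
  omega

theorem stmt_18' (n : ℕ) (hn : 4 ≤ n) :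
    jacoDelta (Nat.fib n) = Nat.fib (n - 1) ∧
      jacoJ (Nat.fib n) = {Nat.fib (n - 1)} := by
  obtain ⟨p, rfl⟩ : ∃ p, n = p + 4 := ⟨n - 4, by omega⟩
  simp only [show p + 4 - 1 = p + 3 from rfl]
  have hB : Nat.fib (p+4) = Nat.fib (p+2) + Nat.fib (p+3) := Nat.fib_add_two
  have hB2 : Nat.fib (p+3) = Nat.fib (p+1) + Nat.fib (p+2) := Nat.fib_add_two
  have hCpos : 0 < Nat.fib (p+2) := Nat.fib_pos.mpr (by omega)
  have hMpos : 0 < Nat.fib (p+3) := Nat.fib_pos.mpr (by omega)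
  have hgM : jacoF (Nat.fib (p+3)) = Nat.fib (p+2) := by
    have := jacoQ (p+1)
    simpa [show p+1+2 = p+3 from rfl, show p+1+1 = p+2 from rfl] using this
  have hfM1 : jacoF (Nat.fib (p+3) + 1) = Nat.fib (p+2) + 1 := by
    have h := jacoT (p+1) (by omega) 1
      (by exact Nat.fib_pos.mpr (by omega))
    simp only [show p+1+2 = p+3 from rfl, show p+1+1 = p+2 from rfl] at h
    rw [h, jacoF_one]
  have hdeg : ∀ j, 1 ≤ j → j ≤ Nat.fib (p+4) →
      jacoDeg (Nat.fib (p+4)) j ≤ Nat.fib (p+3) ∧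
        (jacoDeg (Nat.fib (p+4)) j = Nat.fib (p+3) → j = Nat.fib (p+3)) := by
    intro j hj1 hj2
    rw [jacoDeg_eq _ _ hj1 hj2]
    have hfle := jacoF_le_self j
    rcases le_or_gt j (Nat.fib (p+3)) with hc | hc
    · have hmono : j + jacoF j ≤ Nat.fib (p+3) + jacoF (Nat.fib (p+3)) :=
        jacoG_strictMono.monotone hc
      rw [hgM] at hmono
      constructor <;> omega
    · have hmono : Nat.fib (p+3) + jacoF (Nat.fib (p+3)) < j + jacoF j :=
        jacoG_strictMono hc
      rw [hgM] at hmono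
      have hmono2 : jacoF (Nat.fib (p+3) + 1) ≤ jacoF j := jacoF_mono (by omega)
      rw [hfM1] at hmono2
      constructor <;> omega
  have hdegM : jacoDeg (Nat.fib (p+4)) (Nat.fib (p+3)) = Nat.fib (p+3) := by
    rw [jacoDeg_eq _ _ hMpos (by omega), hgM,
      show Nat.fib (p+4) - Nat.fib (p+3) = Nat.fib (p+2) by omega, min_self]
    omega
  have hmem : Nat.fib (p+3) ∈ Finset.Icc 1 (Nat.fib (p+4)) := by
    simp only [Finset.mem_Icc]
    omega
  have hdelta : jacoDelta (Nat.fib (p+4)) = Nat.fib (p+3) := by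
    apply le_antisymm
    · apply Finset.sup_le
      intro j hj
      simp only [Finset.mem_Icc] at hj
      exact (hdeg j hj.1 hj.2).1
    · exact hdegM ▸ Finset.le_sup hmem
  refine ⟨hdelta, ?_⟩
  ext x
  simp only [jacoJ, Finset.mem_filter, Finset.mem_Icc, Finset.mem_singleton, hdelta]
  constructor
  · rintro ⟨⟨hx1, hx2⟩, hxe⟩
    exact (hdeg x hx1 hx2).2 hxe
  · rintro rfl
    exact ⟨⟨hMpos, by omega⟩, hdegM⟩

/-- For `n ≥ 4`: `Δ(J_{fib n}(1)) = fib (n-1)` and `𝕁(J_{fib n}(1)) = {fib (n-1)}`. -/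
theorem stmt_18 (n : ℕ) (hn : 4 ≤ n) :
    jacoDelta (Nat.fib n) = Nat.fib (n - 1) ∧
      jacoJ (Nat.fib n) = {Nat.fib (n - 1)} := by
  exact stmt_18' n hn
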